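/- Let B be symmetric positive definite and G symmetric positive semidefinite with smallest eigenvalue at least θ_min > 0. Then for any nonzero s ∈ ℝⁿ, (sᵀB(B+G)⁻¹Bs)/(sᵀBs) ≤ 1/(1 + θ_min/λ_max(B)), where λ_max(B) is the largest eigenvalue of B. -/

import Mathlib

open Matrix

/-- If all eigenvalues of a real hermitian matrix are at least `a`,
then `M - a • 1` is positive semidefinite. -/
lemma aux_sub_smul_one_posSemidef {n : ℕ} {M : Matrix (Fin n) (Fin n) ℝ}
    (hM : M.IsHermitian) (a : ℝ) (h : ∀ i, a ≤ hM.eigenvalues i) :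
    (M - a • (1 : Matrix (Fin n) (Fin n) ℝ)).PosSemidef := by
  set U : Matrix (Fin n) (Fin n) ℝ := (hM.eigenvectorUnitary : Matrix (Fin n) (Fin n) ℝ) with hUdef
  have hU : U * star U = 1 := (Matrix.mem_unitaryGroup_iff).mp hM.eigenvectorUnitary.2
  have hD : Matrix.PosSemidef (Matrix.diagonal (fun i => hM.eigenvalues i - a)) :=
    .diagonal (fun i => sub_nonneg.2 (h i))
  have key := hD.mul_mul_conjTranspose_same U
  have heq : M - a • (1 : Matrix (Fin n) (Fin n) ℝ)
      = U * Matrix.diagonal (fun i => hM.eigenvalues i - a) * Uᴴ := by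
    have hst : M = U * Matrix.diagonal (hM.eigenvalues) * star U := by
      have := hM.spectral_theorem
      simpa [Function.comp] using this
    have hdiag : Matrix.diagonal (fun i => hM.eigenvalues i - a)
        = Matrix.diagonal (hM.eigenvalues) - a • (1 : Matrix (Fin n) (Fin n) ℝ) := by
      rw [Matrix.smul_one_eq_diagonal, ← Matrix.diagonal_sub]
    rw [Matrix.star_eq_conjTranspose] at hst
    rw [hdiag, Matrix.mul_sub, Matrix.sub_mul, ← hst, Matrix.mul_smul, Matrix.mul_one,
      Matrix.smul_mul, ← Matrix.star_eq_conjTranspose, hU]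
  rwa [← heq] at key

/-- If all eigenvalues of a real hermitian matrix are at most `b`,
then `b • 1 - M` is positive semidefinite. -/
lemma aux_smul_one_sub_posSemidef {n : ℕ} {M : Matrix (Fin n) (Fin n) ℝ}
    (hM : M.IsHermitian) (b : ℝ) (h : ∀ i, hM.eigenvalues i ≤ b) :
    (b • (1 : Matrix (Fin n) (Fin n) ℝ) - M).PosSemidef := by
  set U : Matrix (Fin n) (Fin n) ℝ := (hM.eigenvectorUnitary : Matrix (Fin n) (Fin n) ℝ) with hUdef
  have hU : U * star U = 1 := (Matrix.mem_unitaryGroup_iff).mp hM.eigenvectorUnitary.2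
  have hD : Matrix.PosSemidef (Matrix.diagonal (fun i => b - hM.eigenvalues i)) :=
    .diagonal (fun i => sub_nonneg.2 (h i))
  have key := hD.mul_mul_conjTranspose_same U
  have heq : b • (1 : Matrix (Fin n) (Fin n) ℝ) - M
      = U * Matrix.diagonal (fun i => b - hM.eigenvalues i) * Uᴴ := by
    have hst : M = U * Matrix.diagonal (hM.eigenvalues) * star U := by
      have := hM.spectral_theorem
      simpa [Function.comp] using this
    have hdiag : Matrix.diagonal (fun i => b - hM.eigenvalues i)
        = b • (1 : Matrix (Fin n) (Fin n) ℝ) - Matrix.diagonal (hM.eigenvalues) := by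
      rw [Matrix.smul_one_eq_diagonal, ← Matrix.diagonal_sub]
    rw [Matrix.star_eq_conjTranspose] at hst
    rw [hdiag, Matrix.mul_sub, Matrix.sub_mul, ← hst, Matrix.mul_smul, Matrix.mul_one,
      Matrix.smul_mul, ← Matrix.star_eq_conjTranspose, hU]
  rwa [← heq] at key

theorem rayleigh_shifted_bound {n : ℕ} (B G : Matrix (Fin n) (Fin n) ℝ)
    (hB : B.PosDef) (hG : G.IsHermitian) (θmin : ℝ) (hθ : 0 < θmin)
    (heig : ∀ i, θmin ≤ hG.eigenvalues i)
    (lamMax : ℝ) (hlam : IsGreatest (Set.range hB.1.eigenvalues) lamMax)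
    (s : Fin n → ℝ) (hs : s ≠ 0) :
    ((B *ᵥ s) ⬝ᵥ (B + G)⁻¹ *ᵥ (B *ᵥ s)) / (s ⬝ᵥ B *ᵥ s) ≤
      1 / (1 + θmin / lamMax) := by
  -- basic positivity facts
  obtain ⟨i₀, hi₀⟩ := hlam.1
  have hlamPos : 0 < lamMax := hi₀ ▸ hB.eigenvalues_pos i₀
  set c : ℝ := θmin / lamMax with hc_def
  have hc : 0 < c := div_pos hθ hlamPos
  set t : ℝ := 1 + c with ht_def
  have ht : 0 < t := by positivity
  have hclam : c * lamMax = θmin := div_mul_cancel₀ θmin hlamPos.ne'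
  -- quadratic form bounds
  have hGlow : ∀ x : Fin n → ℝ, θmin * (x ⬝ᵥ x) ≤ x ⬝ᵥ G *ᵥ x := by
    intro x
    have := (aux_sub_smul_one_posSemidef hG θmin heig).dotProduct_mulVec_nonneg x
    simp only [star_trivial, Matrix.sub_mulVec, Matrix.smul_mulVec,
      Matrix.one_mulVec, dotProduct_sub, dotProduct_smul, smul_eq_mul] at this
    linarith
  have hBup : ∀ x : Fin n → ℝ, x ⬝ᵥ B *ᵥ x ≤ lamMax * (x ⬝ᵥ x) := by
    intro x
    have hb : ∀ i, hB.1.eigenvalues i ≤ lamMax := fun i => hlam.2 ⟨i, rfl⟩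
    have := (aux_smul_one_sub_posSemidef hB.1 lamMax hb).dotProduct_mulVec_nonneg x
    simp only [star_trivial, Matrix.sub_mulVec, Matrix.smul_mulVec,
      Matrix.one_mulVec, dotProduct_sub, dotProduct_smul, smul_eq_mul] at this
    linarith
  -- B is symmetric
  have hBT : Bᵀ = B := by
    ext i j
    have := congrFun (congrFun hB.1 i) j
    simpa [Matrix.conjTranspose_apply] using this
  have hBsymm : ∀ x y : Fin n → ℝ, x ⬝ᵥ B *ᵥ y = y ⬝ᵥ B *ᵥ x := by
    intro x y
    rw [Matrix.dotProduct_mulVec, ← Matrix.mulVec_transpose, hBT, dotProduct_comm]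
  -- the matrix A = B + G is positive definite
  have hGpsd : G.PosSemidef :=
    hG.posSemidef_iff_eigenvalues_nonneg.2 (fun i => le_trans hθ.le (heig i))
  have hA : (B + G).PosDef := hB.add_posSemidef hGpsd
  set A : Matrix (Fin n) (Fin n) ℝ := B + G with hA_def
  set v : Fin n → ℝ := A⁻¹ *ᵥ (B *ᵥ s) with hv_def
  have hAv : A *ᵥ v = B *ᵥ s := by
    rw [hv_def, Matrix.mulVec_mulVec, Matrix.mul_nonsing_inv A
      (isUnit_iff_ne_zero.2 hA.det_pos.ne'), Matrix.one_mulVec]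
  -- key quantities
  set S : ℝ := s ⬝ᵥ B *ᵥ s with hS_def
  have hSpos : 0 < S := by
    have := hB.dotProduct_mulVec_pos hs
    simpa [hS_def] using this
  set p : ℝ := v ⬝ᵥ B *ᵥ s with hp_def
  set N : ℝ := (B *ᵥ s) ⬝ᵥ A⁻¹ *ᵥ (B *ᵥ s) with hN_def
  have hNv : N = (B *ᵥ s) ⬝ᵥ v := rfl
  have hNA : N = v ⬝ᵥ B *ᵥ v + v ⬝ᵥ G *ᵥ v := by
    rw [hNv, dotProduct_comm, ← hAv, hA_def, Matrix.add_mulVec, dotProduct_add]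
  have hNp : N = p := by
    rw [hNv, dotProduct_comm, hp_def, hBsymm]
  -- completing the square: 0 ≤ t * (w ⬝ᵥ B w) with w = v - t⁻¹ • s
  set w : Fin n → ℝ := v - t⁻¹ • s with hw_def
  have hwB : 0 ≤ w ⬝ᵥ B *ᵥ w := by
    have := hB.posSemidef.dotProduct_mulVec_nonneg w
    simpa using this
  have hwexp : w ⬝ᵥ B *ᵥ w = v ⬝ᵥ B *ᵥ v - 2 * t⁻¹ * p + t⁻¹ * t⁻¹ * S := by
    have h1 : s ⬝ᵥ B *ᵥ v = p := by rw [hp_def, hBsymm]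
    rw [hw_def]
    simp only [Matrix.mulVec_sub, Matrix.mulVec_smul, dotProduct_sub, sub_dotProduct,
      dotProduct_smul, smul_dotProduct, smul_eq_mul, h1, ← hp_def, ← hS_def]
    ring
  -- the eigenvalue bounds give c * (v ⬝ᵥ B v) ≤ v ⬝ᵥ G v
  have hGB : c * (v ⬝ᵥ B *ᵥ v) ≤ v ⬝ᵥ G *ᵥ v := by
    have h1 := hBup v
    have h2 := hGlow v
    calc c * (v ⬝ᵥ B *ᵥ v) ≤ c * (lamMax * (v ⬝ᵥ v)) := by
          exact mul_le_mul_of_nonneg_left h1 hc.le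
      _ = θmin * (v ⬝ᵥ v) := by rw [← mul_assoc, hclam]
      _ ≤ v ⬝ᵥ G *ᵥ v := h2
  -- main bound : N ≤ t⁻¹ * S
  have hmain : N ≤ t⁻¹ * S := by
    have e1 : N = 2 * p - (v ⬝ᵥ B *ᵥ v + v ⬝ᵥ G *ᵥ v) := by
      rw [← hNA, ← hNp]; ring
    have e2 : N ≤ 2 * p - t * (v ⬝ᵥ B *ᵥ v) := by
      rw [e1, ht_def]; nlinarith [hGB]
    have e3 : t * (w ⬝ᵥ B *ᵥ w) = t * (v ⬝ᵥ B *ᵥ v) - 2 * p + t⁻¹ * S := by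
      rw [hwexp]
      field_simp
    nlinarith [mul_nonneg ht.le hwB]
  -- conclude
  have : N / S ≤ t⁻¹ := by
    rw [div_le_iff₀ hSpos]
    linarith [hmain]
  calc ((B *ᵥ s) ⬝ᵥ (B + G)⁻¹ *ᵥ (B *ᵥ s)) / (s ⬝ᵥ B *ᵥ s) = N / S := rfl
    _ ≤ t⁻¹ := this
    _ = 1 / (1 + θmin / lamMax) := by rw [one_div, ht_def, hc_def]
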